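/- Correctness of the MIQP reformulation of the complementarity constraints: Assume ℓ_L ≤ u_L and ℓ_R ≤ u_R componentwise. For x ∈ ℝⁿ, the following are equivalent: (i) ℓ_L ≤ Lx ≤ u_L, ℓ_R ≤ Rx ≤ u_R componentwise and (Lx − ℓ_L)ᵀ(Rx − ℓ_R) = 0; (ii) there exist z^L, z^R ∈ {0,1}^{n_c} such that for every i ∈ {1,…,n_c}: z^L_i + z^R_i ≤ 1, ℓ_{L_i} ≤ L_i x, ℓ_{R_i} ≤ R_i x, L_i x ≤ u_{L_i} z^L_i + (1 − z^L_i)ℓ_{L_i}, and R_i x ≤ u_{R_i} z^R_i + (1 − z^R_i)ℓ_{R_i}. -/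
import Mathlib


open Matrix

/-- Correctness of the MIQP reformulation of the complementarity constraints. -/
theorem miqp_reformulation_correct (n nc : ℕ)
    (L R : Matrix (Fin nc) (Fin n) ℝ) (lL uL lR uR : Fin nc → ℝ)
    (hLbnd : ∀ i, lL i ≤ uL i) (hRbnd : ∀ i, lR i ≤ uR i)
    (x : Fin n → ℝ) :
    ((∀ i, lL i ≤ L.mulVec x i ∧ L.mulVec x i ≤ uL i) ∧
      (∀ i, lR i ≤ R.mulVec x i ∧ R.mulVec x i ≤ uR i) ∧
      (L.mulVec x - lL) ⬝ᵥ (R.mulVec x - lR) = 0) ↔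
    (∃ zL zR : Fin nc → ℝ,
      (∀ i, zL i = 0 ∨ zL i = 1) ∧ (∀ i, zR i = 0 ∨ zR i = 1) ∧
      ∀ i, zL i + zR i ≤ 1 ∧
        lL i ≤ L.mulVec x i ∧ lR i ≤ R.mulVec x i ∧
        L.mulVec x i ≤ uL i * zL i + (1 - zL i) * lL i ∧
        R.mulVec x i ≤ uR i * zR i + (1 - zR i) * lR i) := by
  constructor
  · rintro ⟨hL, hR, hdot⟩
    -- each term of the dot product is nonneg, sum zero ⇒ each term zero
    have hterm : ∀ i, (L.mulVec x i - lL i) * (R.mulVec x i - lR i) = 0 := by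
      have h := Finset.sum_eq_zero_iff_of_nonneg (s := Finset.univ)
        (f := fun i => (L.mulVec x i - lL i) * (R.mulVec x i - lR i))
        (fun i _ => mul_nonneg (by linarith [(hL i).1]) (by linarith [(hR i).1]))
      have hsum : ∑ i, (L.mulVec x i - lL i) * (R.mulVec x i - lR i) = 0 := by
        simpa [dotProduct, Pi.sub_apply] using hdot
      intro i
      exact (h.mp hsum) i (Finset.mem_univ i)
    refine ⟨fun i => if L.mulVec x i = lL i then 0 else 1,
            fun i => if L.mulVec x i = lL i then 1 else 0,
            fun i => by by_cases h : L.mulVec x i = lL i <;> simp [h],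
            fun i => by by_cases h : L.mulVec x i = lL i <;> simp [h],
            fun i => ?_⟩
    by_cases h : L.mulVec x i = lL i
    · refine ⟨by simp [h], (hL i).1, (hR i).1, by simp [h], ?_⟩
      simpa [h] using (hR i).2
    · have hRe : R.mulVec x i = lR i := by
        rcases mul_eq_zero.mp (hterm i) with h1 | h2
        · exact absurd (by linarith [sub_eq_zero.mp h1] : L.mulVec x i = lL i) h
        · linarith [sub_eq_zero.mp h2]
      simp only [if_neg h]
      exact ⟨by norm_num, (hL i).1, (hR i).1, by simpa using (hL i).2, by simp [hRe]⟩
  · rintro ⟨zL, zR, hzL, hzR, h⟩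
    have hL : ∀ i, lL i ≤ L.mulVec x i ∧ L.mulVec x i ≤ uL i := by
      intro i
      obtain ⟨_, h1, _, h2, _⟩ := h i
      rcases hzL i with hz | hz <;> simp [hz] at h2 <;>
        exact ⟨h1, le_trans h2 (by first | exact le_refl _ | exact hLbnd i)⟩
    have hR : ∀ i, lR i ≤ R.mulVec x i ∧ R.mulVec x i ≤ uR i := by
      intro i
      obtain ⟨_, _, h1, _, h2⟩ := h i
      rcases hzR i with hz | hz <;> simp [hz] at h2 <;>
        exact ⟨h1, le_trans h2 (by first | exact le_refl _ | exact hRbnd i)⟩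
    refine ⟨hL, hR, ?_⟩
    have hterm : ∀ i, (L.mulVec x i - lL i) * (R.mulVec x i - lR i) = 0 := by
      intro i
      obtain ⟨hsum, h1, h2, h3, h4⟩ := h i
      rcases hzL i with hz | hz
      · simp [hz] at h3
        have : L.mulVec x i = lL i := le_antisymm h3 h1
        simp [this]
      · have : zR i = 0 := by
          rcases hzR i with hz' | hz'
          · exact hz'
          · rw [hz, hz'] at hsum; linarith
        simp [this] at h4
        have : R.mulVec x i = lR i := le_antisymm h4 h2
        simp [this]
    simp only [dotProduct, Pi.sub_apply]
    exact Finset.sum_eq_zero (fun i _ => hterm i)
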